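/- Let H be a simple graph of maximum degree at most Δ and fix a vertex v of H. For each i, the number of isomorphism classes of graphs G_s(i) (over bijections s preserving initial segments {1,...,2^j}) that admit an injective graph homomorphism into H mapping the vertex 0 to v is at most Δ^{5·2^i}. -/

import Mathlib

/-- The graph `G_s` on `ℤ`: the doubly infinite path together with a chord from
`2n` to `-2s(n)` for every `n ≥ 1`. -/
def Gs (s : ℕ → ℕ) : SimpleGraph ℤ :=
  SimpleGraph.fromRel (fun m m' =>
    m' = m + 1 ∨ ∃ n : ℕ, 1 ≤ n ∧ m = 2 * (n : ℤ) ∧ m' = -(2 * (s n : ℤ)))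

/-- `s` is a bijection of `ℕ` mapping `{1,…,2^i}` onto itself for every `i`. -/
def SegPreserving (s : ℕ → ℕ) : Prop :=
  Function.Bijective s ∧
    ∀ i : ℕ, 1 ≤ i → s '' {n | 1 ≤ n ∧ n ≤ 2 ^ i} = {n | 1 ≤ n ∧ n ≤ 2 ^ i}

/-- `G_s(i)`: the induced subgraph of `G_s` on the interval `[-2^(i+1), 2^(i+1)]`. -/
def Gsi (s : ℕ → ℕ) (i : ℕ) : SimpleGraph {m : ℤ | -(2 ^ (i + 1)) ≤ m ∧ m ≤ 2 ^ (i + 1)} :=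
  SimpleGraph.induce {m : ℤ | -(2 ^ (i + 1)) ≤ m ∧ m ≤ 2 ^ (i + 1)} (Gs s)

/-- If `H` has maximum degree at most `Δ` and `v` is a fixed vertex of `H`, then
the number of isomorphism classes of graphs `G_s(i)` admitting an embedding into
`H` sending the vertex `0` to `v` is at most `Δ ^ (5 * 2 ^ i)`: there are
`Δ ^ (5 * 2 ^ i)` graphs such that every such `G_s(i)` is isomorphic to one of them. -/
abbrev Win (i : ℕ) : Set ℤ := {m : ℤ | -(2 ^ (i + 1)) ≤ m ∧ m ≤ 2 ^ (i + 1)}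

lemma Gsi_adj_iff (s : ℕ → ℕ) (i : ℕ) (a b : Win i) :
    (Gsi s i).Adj a b ↔ (a : ℤ) ≠ b ∧
      ((((b : ℤ) = a + 1) ∨ ∃ n : ℕ, 1 ≤ n ∧ (a : ℤ) = 2 * n ∧ (b : ℤ) = -(2 * (s n : ℤ))) ∨
       (((a : ℤ) = b + 1) ∨ ∃ n : ℕ, 1 ≤ n ∧ (b : ℤ) = 2 * n ∧ (a : ℤ) = -(2 * (s n : ℤ)))) := by
  simp [Gsi, Gs, SimpleGraph.fromRel_adj, ne_comm]

lemma Gsi_adj_succ (s : ℕ → ℕ) (i : ℕ) (a b : Win i) (h : (b : ℤ) = (a : ℤ) + 1) :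
    (Gsi s i).Adj a b := by
  rw [Gsi_adj_iff]
  exact ⟨by omega, Or.inl (Or.inl h)⟩

lemma Gsi_adj_chord (s : ℕ → ℕ) (i : ℕ) (a b : Win i) (n : ℕ) (hn : 1 ≤ n)
    (ha : (a : ℤ) = 2 * n) (hb : (b : ℤ) = -(2 * (s n : ℤ))) : (Gsi s i).Adj a b := by
  rw [Gsi_adj_iff]
  refine ⟨?_, Or.inl (Or.inr ⟨n, hn, ha, hb⟩)⟩
  have h1 : (1 : ℤ) ≤ (n : ℤ) := by exact_mod_cast hn
  have h2 : (0 : ℤ) ≤ (s n : ℤ) := Int.natCast_nonneg _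
  omega

lemma Gsi_congr (s s' : ℕ → ℕ) (i : ℕ) (h : ∀ n : ℕ, 1 ≤ n → n ≤ 2 ^ i → s n = s' n) :
    Gsi s i = Gsi s' i := by
  have key : ∀ (t t' : ℕ → ℕ), (∀ n : ℕ, 1 ≤ n → n ≤ 2 ^ i → t n = t' n) →
      ∀ x y : Win i, (∃ n : ℕ, 1 ≤ n ∧ (x : ℤ) = 2 * n ∧ (y : ℤ) = -(2 * (t n : ℤ))) →
        (∃ n : ℕ, 1 ≤ n ∧ (x : ℤ) = 2 * n ∧ (y : ℤ) = -(2 * (t' n : ℤ))) := by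
    rintro t t' ht x y ⟨n, hn1, hx, hy⟩
    refine ⟨n, hn1, hx, ?_⟩
    have hxu : (x : ℤ) ≤ 2 ^ (i + 1) := x.2.2
    have h2 : (2 : ℤ) ^ (i + 1) = 2 * 2 ^ i := by ring
    have : (n : ℤ) ≤ 2 ^ i := by omega
    have hn2 : n ≤ 2 ^ i := by exact_mod_cast this
    rw [← ht n hn1 hn2]; exact hy
  ext a b
  rw [Gsi_adj_iff, Gsi_adj_iff]
  constructor
  · rintro ⟨hne, (h2 | h2) | (h2 | h2)⟩
    exacts [⟨hne, Or.inl (Or.inl h2)⟩, ⟨hne, Or.inl (Or.inr (key s s' h a b h2))⟩,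
      ⟨hne, Or.inr (Or.inl h2)⟩, ⟨hne, Or.inr (Or.inr (key s s' h b a h2))⟩]
  · have h' : ∀ n : ℕ, 1 ≤ n → n ≤ 2 ^ i → s' n = s n := fun n a b => (h n a b).symm
    rintro ⟨hne, (h2 | h2) | (h2 | h2)⟩
    exacts [⟨hne, Or.inl (Or.inl h2)⟩, ⟨hne, Or.inl (Or.inr (key s' s h' a b h2))⟩,
      ⟨hne, Or.inr (Or.inl h2)⟩, ⟨hne, Or.inr (Or.inr (key s' s h' b a h2))⟩]

lemma seg_mem {s : ℕ → ℕ} (hs : SegPreserving s) {j n : ℕ} (hj : 1 ≤ j) (h1 : 1 ≤ n)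
    (h2 : n ≤ 2 ^ j) : 1 ≤ s n ∧ s n ≤ 2 ^ j := by
  have himg := hs.2 j hj
  have hmem : s n ∈ s '' {n | 1 ≤ n ∧ n ≤ 2 ^ j} := ⟨n, ⟨h1, h2⟩, rfl⟩
  rw [himg] at hmem
  exact hmem

lemma pat_bound {s : ℕ → ℕ} (hs : SegPreserving s) (i n : ℕ) (h1 : 1 ≤ n) (h2 : n ≤ 2 ^ i) :
    1 ≤ s n ∧ s n ≤ 2 ^ i + 1 := by
  rcases Nat.eq_zero_or_pos i with rfl | hi
  · have h2' : n ≤ 2 ^ 1 := by norm_num at h2 ⊢; omega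
    have := seg_mem hs le_rfl h1 h2'
    norm_num at this ⊢; omega
  · have := seg_mem hs hi h1 h2
    omega

lemma exists_encdec {V : Type} (H : SimpleGraph V) (Δ : ℕ)
    (hdeg : ∀ w : V, (H.neighborSet w).Finite ∧ (H.neighborSet w).ncard ≤ Δ)
    (v : V) (hΔ : 1 ≤ Δ) :
    ∃ (E : V → V → Fin Δ) (D : V → Fin Δ → V), ∀ w x, H.Adj w x → D w (E w x) = x := by
  classical
  have h : ∀ w : V, ∃ (e : V → Fin Δ) (d : Fin Δ → V), ∀ x, H.Adj w x → d (e x) = x := by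
    intro w
    obtain ⟨hf, hc⟩ := hdeg w
    haveI : Fintype (H.neighborSet w) := hf.fintype
    have hcard : Fintype.card (H.neighborSet w) ≤ Fintype.card (Fin Δ) := by
      rw [Fintype.card_fin, ← Nat.card_eq_fintype_card, Nat.card_coe_set_eq]; exact hc
    obtain ⟨f⟩ := Function.Embedding.nonempty_of_card_le hcard
    refine ⟨fun x => if h : x ∈ H.neighborSet w then f ⟨x, h⟩ else ⟨0, hΔ⟩,
      fun k => if h : ∃ y : H.neighborSet w, f y = k then ((Classical.choose h : H.neighborSet w) : V) else v, ?_⟩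
    intro x hx
    have hx' : x ∈ H.neighborSet w := hx
    dsimp only
    rw [dif_pos hx']
    have hex : ∃ y : H.neighborSet w, f y = f ⟨x, hx'⟩ := ⟨⟨x, hx'⟩, rfl⟩
    rw [dif_pos hex]
    have := f.injective (Classical.choose_spec hex)
    rw [this]
  choose E D hED using h
  exact ⟨E, D, hED⟩

def EmbCond {V : Type} (H : SimpleGraph V) (v : V) (i : ℕ) (s : ℕ → ℕ) : Prop :=
  ∃ φ : Gsi s i →g H, Function.Injective φ ∧
    φ ⟨0, ⟨neg_nonpos.mpr (by positivity), by positivity⟩⟩ = v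

def GoodPat {V : Type} (H : SimpleGraph V) (v : V) (i : ℕ) :
    Set (Fin (2 ^ i) → Fin (2 ^ i + 1)) :=
  {p | ∃ s : ℕ → ℕ, SegPreserving s ∧ EmbCond H v i s ∧
        ∀ n : Fin (2 ^ i), s ((n : ℕ) + 1) = (p n : ℕ) + 1}

lemma goodPat_emb {V : Type} (H : SimpleGraph V) (Δ : ℕ)
    (hdeg : ∀ w : V, (H.neighborSet w).Finite ∧ (H.neighborSet w).ncard ≤ Δ)
    (v : V) (i : ℕ) (hΔ : 2 ≤ Δ) (hi : 1 ≤ i) :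
    Nonempty (↥(GoodPat H v i) ↪ Fin (Δ ^ (5 * 2 ^ i))) := by
  classical
  obtain ⟨E, D, hED⟩ := exists_encdec H Δ hdeg v (by omega)
  set A := GoodPat H v i with hAdef
  let sA : ↥A → (ℕ → ℕ) := fun a => Classical.choose a.2
  have hsA : ∀ a : ↥A, SegPreserving (sA a) ∧ EmbCond H v i (sA a) ∧
      ∀ n : Fin (2 ^ i), sA a ((n : ℕ) + 1) = ((a : Fin (2 ^ i) → Fin (2 ^ i + 1)) n : ℕ) + 1 :=
    fun a => Classical.choose_spec a.2
  let φA : (a : ↥A) → (Gsi (sA a) i →g H) := fun a => Classical.choose (hsA a).2.1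
  have hφA : ∀ a : ↥A, Function.Injective (φA a) ∧
      (φA a) ⟨0, ⟨neg_nonpos.mpr (by positivity), by positivity⟩⟩ = v :=
    fun a => Classical.choose_spec (hsA a).2.1
  have memP : ∀ k : ℕ, k ≤ 2 ^ (i + 1) → ((k : ℤ) ∈ Win i) := by
    intro k hk
    have h1 : (0 : ℤ) ≤ (k : ℤ) := Int.natCast_nonneg _
    have h2 : (k : ℤ) ≤ 2 ^ (i + 1) := by exact_mod_cast hk
    have h3 : (0 : ℤ) < 2 ^ (i + 1) := by positivity
    exact ⟨by omega, h2⟩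
  have memM : ∀ k : ℕ, k ≤ 2 ^ (i + 1) → ((-(k : ℤ)) ∈ Win i) := by
    intro k hk
    have h1 : (0 : ℤ) ≤ (k : ℤ) := Int.natCast_nonneg _
    have h2 : (k : ℤ) ≤ 2 ^ (i + 1) := by exact_mod_cast hk
    have h3 : (0 : ℤ) < 2 ^ (i + 1) := by positivity
    exact ⟨by omega, by omega⟩
  let P : ↥A → ℕ → V := fun a k => if h : ((k : ℤ) ∈ Win i) then φA a ⟨(k : ℤ), h⟩ else v
  let M : ↥A → ℕ → V := fun a k => if h : ((-(k : ℤ)) ∈ Win i) then φA a ⟨-(k : ℤ), h⟩ else v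
  have hPval : ∀ (a : ↥A) (k : ℕ) (hk : k ≤ 2 ^ (i + 1)), P a k = φA a ⟨(k : ℤ), memP k hk⟩ :=
    fun a k hk => dif_pos _
  have hMval : ∀ (a : ↥A) (k : ℕ) (hk : k ≤ 2 ^ (i + 1)), M a k = φA a ⟨-(k : ℤ), memM k hk⟩ :=
    fun a k hk => dif_pos _
  have hP0 : ∀ a : ↥A, P a 0 = v := by
    intro a
    rw [hPval a 0 (Nat.zero_le _)]
    convert (hφA a).2 using 2
    simp
  have hM0 : ∀ a : ↥A, M a 0 = v := by
    intro a
    rw [hMval a 0 (Nat.zero_le _)]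
    convert (hφA a).2 using 2
    simp
  have hPadj : ∀ (a : ↥A) (k : ℕ), k < 2 ^ (i + 1) → H.Adj (P a k) (P a (k + 1)) := by
    intro a k hk
    rw [hPval a k hk.le, hPval a (k + 1) hk]
    exact (φA a).map_adj (Gsi_adj_succ (sA a) i _ _ (by push_cast; ring))
  have hMadj : ∀ (a : ↥A) (k : ℕ), k < 2 ^ (i + 1) → H.Adj (M a k) (M a (k + 1)) := by
    intro a k hk
    rw [hMval a k hk.le, hMval a (k + 1) hk]
    exact ((φA a).map_adj (Gsi_adj_succ (sA a) i ⟨-((k + 1 : ℕ) : ℤ), memM (k + 1) hk⟩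
      ⟨-((k : ℕ) : ℤ), memM k hk.le⟩ (by push_cast; ring))).symm
  have hbnd : ∀ (a : ↥A) (n : ℕ), 1 ≤ n → n ≤ 2 ^ i → 1 ≤ sA a n ∧ sA a n ≤ 2 ^ i :=
    fun a n h1 h2 => seg_mem (hsA a).1 hi h1 h2
  have hpow : 2 ^ (i + 1) = 2 * 2 ^ i := by ring
  have hCadj : ∀ (a : ↥A) (n : Fin (2 ^ i)),
      H.Adj (P a (2 * ((n : ℕ) + 1))) (M a (2 * sA a ((n : ℕ) + 1))) := by
    intro a n
    have hn1 : (n : ℕ) + 1 ≤ 2 ^ i := n.isLt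
    have hb := hbnd a ((n : ℕ) + 1) (by omega) hn1
    have h2a : 2 * ((n : ℕ) + 1) ≤ 2 ^ (i + 1) := by omega
    have h2b : 2 * sA a ((n : ℕ) + 1) ≤ 2 ^ (i + 1) := by omega
    rw [hPval a _ h2a, hMval a _ h2b]
    exact (φA a).map_adj (Gsi_adj_chord (sA a) i _ _ ((n : ℕ) + 1) (by omega)
      (by push_cast; ring) (by push_cast; ring))
  let code : ↥A → (Fin (2 ^ (i + 1)) → Fin Δ) × (Fin (2 ^ (i + 1)) → Fin Δ) × (Fin (2 ^ i) → Fin Δ) :=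
    fun a => (fun k => E (P a k) (P a ((k : ℕ) + 1)),
              fun k => E (M a k) (M a ((k : ℕ) + 1)),
              fun n => E (P a (2 * ((n : ℕ) + 1))) (M a (2 * sA a ((n : ℕ) + 1))))
  have hcode : Function.Injective code := by
    intro a a' hc
    have hP : ∀ k : ℕ, k ≤ 2 ^ (i + 1) → P a k = P a' k := by
      intro k
      induction k with
      | zero => intro _; rw [hP0, hP0]
      | succ k ih =>
        intro hk1
        have hk : k < 2 ^ (i + 1) := hk1
        have ihk := ih (Nat.le_of_succ_le hk1)
        have hE : E (P a k) (P a (k + 1)) = E (P a' k) (P a' (k + 1)) :=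
          congrFun (congrArg Prod.fst hc) ⟨k, hk⟩
        calc P a (k + 1) = D (P a k) (E (P a k) (P a (k + 1))) := (hED _ _ (hPadj a k hk)).symm
          _ = D (P a' k) (E (P a' k) (P a' (k + 1))) := by rw [hE, ihk]
          _ = P a' (k + 1) := hED _ _ (hPadj a' k hk)
    have hM : ∀ k : ℕ, k ≤ 2 ^ (i + 1) → M a k = M a' k := by
      intro k
      induction k with
      | zero => intro _; rw [hM0, hM0]
      | succ k ih =>
        intro hk1
        have hk : k < 2 ^ (i + 1) := hk1
        have ihk := ih (Nat.le_of_succ_le hk1)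
        have hE : E (M a k) (M a (k + 1)) = E (M a' k) (M a' (k + 1)) :=
          congrFun (congrArg (fun z => z.2.1) hc) ⟨k, hk⟩
        calc M a (k + 1) = D (M a k) (E (M a k) (M a (k + 1))) := (hED _ _ (hMadj a k hk)).symm
          _ = D (M a' k) (E (M a' k) (M a' (k + 1))) := by rw [hE, ihk]
          _ = M a' (k + 1) := hED _ _ (hMadj a' k hk)
    refine Subtype.ext (funext fun n => ?_)
    have hn1 : (n : ℕ) + 1 ≤ 2 ^ i := n.isLt
    have hb := hbnd a ((n : ℕ) + 1) (by omega) hn1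
    have hb' := hbnd a' ((n : ℕ) + 1) (by omega) hn1
    have h2a : 2 * ((n : ℕ) + 1) ≤ 2 ^ (i + 1) := by omega
    have h2b : 2 * sA a ((n : ℕ) + 1) ≤ 2 ^ (i + 1) := by omega
    have h2b' : 2 * sA a' ((n : ℕ) + 1) ≤ 2 ^ (i + 1) := by omega
    have hE : E (P a (2 * ((n : ℕ) + 1))) (M a (2 * sA a ((n : ℕ) + 1))) =
        E (P a' (2 * ((n : ℕ) + 1))) (M a' (2 * sA a' ((n : ℕ) + 1))) :=
      congrFun (congrArg (fun z => z.2.2) hc) n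
    have key : M a' (2 * sA a ((n : ℕ) + 1)) = M a' (2 * sA a' ((n : ℕ) + 1)) := by
      calc M a' (2 * sA a ((n : ℕ) + 1)) = M a (2 * sA a ((n : ℕ) + 1)) := (hM _ h2b).symm
        _ = D (P a (2 * ((n : ℕ) + 1))) (E (P a (2 * ((n : ℕ) + 1))) (M a (2 * sA a ((n : ℕ) + 1)))) :=
            (hED _ _ (hCadj a n)).symm
        _ = D (P a' (2 * ((n : ℕ) + 1))) (E (P a' (2 * ((n : ℕ) + 1))) (M a' (2 * sA a' ((n : ℕ) + 1)))) := by
            rw [hE, hP _ h2a]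
        _ = M a' (2 * sA a' ((n : ℕ) + 1)) := hED _ _ (hCadj a' n)
    rw [hMval a' _ h2b, hMval a' _ h2b'] at key
    have hsub := (hφA a').1 key
    have hval : -((2 * sA a ((n : ℕ) + 1) : ℕ) : ℤ) = -((2 * sA a' ((n : ℕ) + 1) : ℕ) : ℤ) :=
      congrArg Subtype.val hsub
    have hss : sA a ((n : ℕ) + 1) = sA a' ((n : ℕ) + 1) := by
      push_cast at hval; omega
    have e1 := (hsA a).2.2 n
    have e2 := (hsA a').2.2 n
    have : ((a : Fin (2 ^ i) → Fin (2 ^ i + 1)) n : ℕ) = ((a' : Fin (2 ^ i) → Fin (2 ^ i + 1)) n : ℕ) := by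
      omega
    exact Fin.ext this
  have hcard : Fintype.card ((Fin (2 ^ (i + 1)) → Fin Δ) × (Fin (2 ^ (i + 1)) → Fin Δ) × (Fin (2 ^ i) → Fin Δ)) = Δ ^ (5 * 2 ^ i) := by
    have hexp : 2 ^ (i + 1) + (2 ^ (i + 1) + 2 ^ i) = 5 * 2 ^ i := by omega
    simp [Fintype.card_fun, ← pow_add, hexp]
  exact ⟨(⟨code, hcode⟩ : ↥A ↪ _).trans (Fintype.equivFinOfCardEq hcard).toEmbedding⟩

lemma goodPat_emb0 {V : Type} (H : SimpleGraph V) (Δ : ℕ) (v : V) (hΔ : 2 ≤ Δ) :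
    Nonempty (↥(GoodPat H v 0) ↪ Fin (Δ ^ (5 * 2 ^ 0))) := by
  classical
  haveI : Fintype ↥(GoodPat H v 0) := Fintype.ofFinite _
  apply Function.Embedding.nonempty_of_card_le
  have h1 : Fintype.card ↥(GoodPat H v 0) ≤ Fintype.card (Fin (2 ^ 0) → Fin (2 ^ 0 + 1)) :=
    Fintype.card_le_of_embedding (Function.Embedding.subtype _)
  have h2 : Fintype.card (Fin (2 ^ 0) → Fin (2 ^ 0 + 1)) = 2 := by simp
  have h3 : 2 ≤ Δ ^ (5 * 2 ^ 0) := le_trans hΔ (Nat.le_self_pow (by norm_num) Δ)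
  rw [Fintype.card_fin]
  omega

theorem stmt_14 {V : Type} (H : SimpleGraph V) (Δ : ℕ)
    (hdeg : ∀ w : V, (H.neighborSet w).Finite ∧ (H.neighborSet w).ncard ≤ Δ)
    (v : V) (i : ℕ) :
    ∃ reps : Fin (Δ ^ (5 * 2 ^ i)) → (ℕ → ℕ),
      ∀ s : ℕ → ℕ, SegPreserving s →
        (∃ φ : Gsi s i →g H, Function.Injective φ ∧
          φ ⟨0, ⟨neg_nonpos.mpr (by positivity), by positivity⟩⟩ = v) →
        ∃ j : Fin (Δ ^ (5 * 2 ^ i)), Nonempty (Gsi s i ≃g Gsi (reps j) i) := by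
  classical
  by_cases hex : ∃ s : ℕ → ℕ, SegPreserving s ∧ EmbCond H v i s
  · obtain ⟨s₀, hs₀, φ₀, hinj₀, hv₀⟩ := hex
    have h0 : (0 : ℤ) < 2 ^ (i + 1) := by positivity
    have mem0 : (0 : ℤ) ∈ Win i := ⟨by omega, by omega⟩
    have mem1 : (1 : ℤ) ∈ Win i := ⟨by omega, by omega⟩
    have memm1 : (-1 : ℤ) ∈ Win i := ⟨by omega, by omega⟩
    have hv₀' : φ₀ ⟨0, mem0⟩ = v := hv₀
    have hA : H.Adj v (φ₀ ⟨1, mem1⟩) := by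
      have h := φ₀.map_adj (Gsi_adj_succ s₀ i ⟨0, mem0⟩ ⟨1, mem1⟩ (by norm_num))
      rwa [hv₀'] at h
    have hB : H.Adj v (φ₀ ⟨-1, memm1⟩) := by
      have h := (φ₀.map_adj (Gsi_adj_succ s₀ i ⟨-1, memm1⟩ ⟨0, mem0⟩ (by norm_num))).symm
      rwa [hv₀'] at h
    have hne : φ₀ ⟨1, mem1⟩ ≠ φ₀ ⟨-1, memm1⟩ := by
      intro h
      have h2 := congrArg Subtype.val (hinj₀ h)
      norm_num at h2
    have hΔ2 : 2 ≤ Δ := by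
      have hsub : ({φ₀ ⟨1, mem1⟩, φ₀ ⟨-1, memm1⟩} : Set V) ⊆ H.neighborSet v :=
        Set.pair_subset hA hB
      have hle := Set.ncard_le_ncard hsub (hdeg v).1
      rw [Set.ncard_pair hne] at hle
      exact le_trans hle (hdeg v).2
    obtain ⟨ι⟩ : Nonempty (↥(GoodPat H v i) ↪ Fin (Δ ^ (5 * 2 ^ i))) := by
      rcases Nat.eq_zero_or_pos i with rfl | hi
      · exact goodPat_emb0 H Δ v hΔ2
      · exact goodPat_emb H Δ hdeg v i hΔ2 hi
    let wit : ↥(GoodPat H v i) → (ℕ → ℕ) := fun a => Classical.choose a.2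
    have hwit : ∀ a : ↥(GoodPat H v i), SegPreserving (wit a) ∧ EmbCond H v i (wit a) ∧
        ∀ n : Fin (2 ^ i), wit a ((n : ℕ) + 1) =
          ((a : Fin (2 ^ i) → Fin (2 ^ i + 1)) n : ℕ) + 1 :=
      fun a => Classical.choose_spec a.2
    refine ⟨fun j => if h : ∃ a : ↥(GoodPat H v i), ι a = j then wit (Classical.choose h) else id, ?_⟩
    intro s hs hemb
    have hemb' : EmbCond H v i s := hemb
    have hpb : ∀ n : Fin (2 ^ i), 1 ≤ s ((n : ℕ) + 1) ∧ s ((n : ℕ) + 1) ≤ 2 ^ i + 1 := fun n =>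
      pat_bound hs i ((n : ℕ) + 1) (by omega) n.isLt
    let p : Fin (2 ^ i) → Fin (2 ^ i + 1) := fun n => ⟨s ((n : ℕ) + 1) - 1, by have := hpb n; omega⟩
    have hp : p ∈ GoodPat H v i :=
      ⟨s, hs, hemb', fun n => by
        have := hpb n
        show s ((n : ℕ) + 1) = s ((n : ℕ) + 1) - 1 + 1
        omega⟩
    refine ⟨ι ⟨p, hp⟩, ?_⟩
    have hj : ∃ b : ↥(GoodPat H v i), ι b = ι ⟨p, hp⟩ := ⟨⟨p, hp⟩, rfl⟩
    have hchoose : Classical.choose hj = ⟨p, hp⟩ := ι.injective (Classical.choose_spec hj)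
    have heq : Gsi s i = Gsi (wit ⟨p, hp⟩) i := by
      refine Gsi_congr _ _ _ (fun n h1 h2 => ?_)
      have hlt : n - 1 < 2 ^ i := by omega
      have e : wit ⟨p, hp⟩ (n - 1 + 1) = s (n - 1 + 1) - 1 + 1 := (hwit ⟨p, hp⟩).2.2 ⟨n - 1, hlt⟩
      have hn1 : n - 1 + 1 = n := by omega
      rw [hn1] at e
      have hsn := pat_bound hs i n h1 h2
      omega
    beta_reduce
    rw [dif_pos hj, hchoose, ← heq]
    exact ⟨RelIso.refl _⟩
  · refine ⟨fun _ => id, fun s hs hemb => absurd ⟨s, hs, hemb⟩ hex⟩
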